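/- Let p be a prime and k a positive integer. Suppose D ⊆ (ℤ/pℤ)^* has the property that the sets B_{k,p}(d) with d ∈ D cover (ℤ/pℤ)^*, i.e. every nonzero residue modulo p lies in some B_{k,p}(d) with d ∈ D. Then there exists a p-ary k-radius sequence of length |D|·(p+k−1)+1; in particular f_k(p) ≤ |D|·(p+k−1)+1. -/

import Mathlib

/-- An `n`-ary `k`-radius sequence of length `m`: any two distinct alphabet symbols
occur within distance `k` of each other somewhere in the sequence. -/
def IsRadiusSeq (k n m : ℕ) (a : Fin m → Fin n) : Prop :=
  ∀ x y : Fin n, x ≠ y →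
    ∃ i j : Fin m, a i = x ∧ a j = y ∧ |(i.val : ℤ) - (j.val : ℤ)| ≤ (k : ℤ)

/-- `radiusMin k n` is `f_k(n)`, the shortest length of an `n`-ary `k`-radius sequence. -/
noncomputable def radiusMin (k n : ℕ) : ℕ :=
  sInf {m | ∃ a : Fin m → Fin n, IsRadiusSeq k n m a}

/-- `B_{k,p}(d) = d·{±1, ±2, …, ±k} ⊆ ℤ/pℤ`. -/
def Bset (k p : ℕ) (d : ZMod p) : Set (ZMod p) :=
  {z | ∃ i : ℕ, 1 ≤ i ∧ i ≤ k ∧ (z = (i : ZMod p) * d ∨ z = -((i : ZMod p) * d))}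

/-- Starting point of the `q`-th block. -/
def cfun (p k : ℕ) (dfun : ℕ → ZMod p) (q : ℕ) : ZMod p :=
  ((p + k - 1 : ℕ) : ZMod p) * ∑ j ∈ Finset.range q, dfun j

/-- The value at global position `m` of the concatenated affine blocks. -/
def gfun (p k : ℕ) (dfun : ℕ → ZMod p) (m : ℕ) : ZMod p :=
  cfun p k dfun (m / (p + k - 1)) +
    ((m % (p + k - 1) : ℕ) : ZMod p) * dfun (m / (p + k - 1))

lemma gfun_block (p k : ℕ) (dfun : ℕ → ZMod p) (hpk : 0 < p + k - 1) (q t : ℕ)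
    (ht : t ≤ p + k - 1) :
    gfun p k dfun ((p + k - 1) * q + t) = cfun p k dfun q + (t : ZMod p) * dfun q := by
  set N := p + k - 1 with hN
  rcases lt_or_eq_of_le ht with h | h
  · have hdiv : (N * q + t) / N = q := by
      rw [Nat.mul_add_div hpk, Nat.div_eq_of_lt h, add_zero]
    have hmod : (N * q + t) % N = t := by
      rw [Nat.mul_add_mod, Nat.mod_eq_of_lt h]
    simp only [gfun, ← hN, hdiv, hmod]
  · subst h
    have h2 : N * q + N = N * (q + 1) := by ring
    rw [h2]
    have hdiv : (N * (q + 1)) / N = q + 1 := Nat.mul_div_cancel_left _ hpk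
    have hmod : (N * (q + 1)) % N = 0 := Nat.mul_mod_right _ _
    simp only [gfun, ← hN, hdiv, hmod, Nat.cast_zero, zero_mul, add_zero]
    simp only [cfun, ← hN, Finset.sum_range_succ]
    ring

theorem stmt_2 (p k : ℕ) (hp : p.Prime) (hk : 0 < k) (D : Finset (ZMod p))
    (hD : ∀ d ∈ D, d ≠ 0)
    (hcover : ∀ z : ZMod p, z ≠ 0 → ∃ d ∈ D, z ∈ Bset k p d) :
    (∃ a : Fin (D.card * (p + k - 1) + 1) → Fin p,
        IsRadiusSeq k p (D.card * (p + k - 1) + 1) a) ∧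
      radiusMin k p ≤ D.card * (p + k - 1) + 1 := by
  haveI : Fact p.Prime := ⟨hp⟩
  haveI : NeZero p := ⟨hp.pos.ne'⟩
  have hp2 := hp.two_le
  set N := p + k - 1 with hN
  have hNpos : 0 < N := by omega
  have hpN : p ≤ N := by omega
  set e := D.equivFin with he
  set dfun : ℕ → ZMod p :=
    fun q => if h : q < D.card then ((e.symm ⟨q, h⟩ : D) : ZMod p) else 1 with hdfun
  -- main existence lemma: a pair X, Y = X + i·d appears at distance i in block of d
  have hmain : ∀ (X Y d : ZMod p), d ∈ D → ∀ i : ℕ, 1 ≤ i → i ≤ k →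
      Y = X + (i : ZMod p) * d →
      ∃ m₁ m₂ : ℕ, m₂ = m₁ + i ∧ m₂ < D.card * N + 1 ∧
        gfun p k dfun m₁ = X ∧ gfun p k dfun m₂ = Y := by
    intro X Y d hd i hi1 hik hXY
    set q := (e ⟨d, hd⟩ : Fin D.card).val with hq
    have hqlt : q < D.card := (e ⟨d, hd⟩).isLt
    have hdq : dfun q = d := by
      simp only [hdfun, hq, dif_pos hqlt]
      rw [dif_pos (e ⟨d, hd⟩).isLt, Fin.eta]
      exact congrArg Subtype.val (e.symm_apply_apply ⟨d, hd⟩)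
    have hdne : d ≠ 0 := hD d hd
    set s := ((X - cfun p k dfun q) * d⁻¹).val with hs
    have hslt : s < p := ZMod.val_lt _
    have hscast : ((s : ℕ) : ZMod p) = (X - cfun p k dfun q) * d⁻¹ :=
      ZMod.natCast_zmod_val _
    have hXval : cfun p k dfun q + (s : ZMod p) * d = X := by
      rw [hscast]
      field_simp
      ring
    have hg1 : gfun p k dfun (N * q + s) = X := by
      rw [gfun_block p k dfun hNpos q s (le_of_lt (lt_of_lt_of_le hslt hpN)), hdq, hXval]
    have hsi : s + i ≤ N := by omega
    have hg2 : gfun p k dfun (N * q + (s + i)) = Y := by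
      rw [gfun_block p k dfun hNpos q _ hsi, hdq]
      push_cast
      rw [hXY, ← hXval]
      ring
    refine ⟨N * q + s, N * q + (s + i), by ring, ?_, hg1, hg2⟩
    have h1 : N * q + (s + i) ≤ N * (q + 1) := by
      rw [Nat.mul_succ]; omega
    have h2 : N * (q + 1) ≤ N * D.card := Nat.mul_le_mul_left N hqlt
    have h3 : N * D.card = D.card * N := Nat.mul_comm _ _
    omega
  -- the sequence
  have ha : IsRadiusSeq k p (D.card * N + 1)
      (fun i => (⟨(gfun p k dfun i.val).val, ZMod.val_lt _⟩ : Fin p)) := by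
    intro x y hxy
    set X := ((x.val : ℕ) : ZMod p) with hX
    set Y := ((y.val : ℕ) : ZMod p) with hY
    have hXY : X ≠ Y := by
      intro h
      apply hxy
      have h2 := congrArg ZMod.val h
      rw [ZMod.val_cast_of_lt x.isLt, ZMod.val_cast_of_lt y.isLt] at h2
      exact Fin.ext h2
    have hz : Y - X ≠ 0 := sub_ne_zero.mpr (Ne.symm hXY)
    obtain ⟨d, hd, i, hi1, hik, hor⟩ := hcover _ hz
    rcases hor with h | h
    · -- Y = X + i d
      have hYX : Y = X + (i : ZMod p) * d := by
        rw [← h]; ring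
      obtain ⟨m₁, m₂, hm, hlt, hg1, hg2⟩ := hmain X Y d hd i hi1 hik hYX
      refine ⟨⟨m₁, by omega⟩, ⟨m₂, hlt⟩, ?_, ?_, ?_⟩
      · apply Fin.ext
        show (gfun p k dfun m₁).val = x.val
        rw [hg1, hX, ZMod.val_cast_of_lt x.isLt]
      · apply Fin.ext
        show (gfun p k dfun m₂).val = y.val
        rw [hg2, hY, ZMod.val_cast_of_lt y.isLt]
      · show |(m₁ : ℤ) - (m₂ : ℤ)| ≤ (k : ℤ)
        rw [abs_le]
        constructor <;> omega
    · -- X = Y + i d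
      have hXY2 : X = Y + (i : ZMod p) * d := by
        have : Y - X = -((i : ZMod p) * d) := h
        linear_combination -this
      obtain ⟨m₁, m₂, hm, hlt, hg1, hg2⟩ := hmain Y X d hd i hi1 hik hXY2
      refine ⟨⟨m₂, hlt⟩, ⟨m₁, by omega⟩, ?_, ?_, ?_⟩
      · apply Fin.ext
        show (gfun p k dfun m₂).val = x.val
        rw [hg2, hX, ZMod.val_cast_of_lt x.isLt]
      · apply Fin.ext
        show (gfun p k dfun m₁).val = y.val
        rw [hg1, hY, ZMod.val_cast_of_lt y.isLt]
      · show |(m₂ : ℤ) - (m₁ : ℤ)| ≤ (k : ℤ)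
        rw [abs_le]
        constructor <;> omega
  exact ⟨⟨_, ha⟩, Nat.sInf_le ⟨_, ha⟩⟩
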